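/- Let K be a field, u_0 = (1 + x_0 - x_1)(1 - x_3), v_0 = 1 - x_3 - x_0^2 + x_0 x_1 ∈ K[M]. If (u', v') is a solution of (1 - x_0)u = (1 - x_1)v in K[M] and w ∈ K[M], then the pair u = u_0 w + (1 - x_1)φ(u'), v = v_0 w + φ(u') - x_0 φ(v') is also a solution of (1 - x_0)u = (1 - x_1)v. -/

import Mathlib

/-- The defining relation of Thompson's monoid: `x_j x_i = x_i x_{j+1}` for `i < j`. -/
def thompsonRel : FreeMonoid ℕ → FreeMonoid ℕ → Prop := fun a b =>
  ∃ i j : ℕ, i < j ∧ a = FreeMonoid.of j * FreeMonoid.of i ∧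
    b = FreeMonoid.of i * FreeMonoid.of (j + 1)

/-- The congruence on the free monoid generated by the Thompson relations. -/
def thompsonCon : Con (FreeMonoid ℕ) := conGen thompsonRel

/-- Thompson's monoid `M`. -/
abbrev ThompsonM := thompsonCon.Quotient

/-- The generators `x_n` of Thompson's monoid. -/
def xM (n : ℕ) : ThompsonM := thompsonCon.mk' (FreeMonoid.of n)

/-- The shift endomorphism `φ : M → M`, `x_i ↦ x_{i+1}`. -/
def shiftM : ThompsonM →* ThompsonM :=
  Con.lift _ ((Con.mk' thompsonCon).comp (FreeMonoid.map Nat.succ)) (by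
    apply Con.conGen_le.2
    rintro a b ⟨i, j, hij, rfl, rfl⟩
    simp only [Con.ker_rel, MonoidHom.comp_apply, map_mul, FreeMonoid.map_of]
    exact Con.eq _ |>.2 (ConGen.Rel.of _ _ ⟨i + 1, j + 1, by omega, rfl, rfl⟩))

/-- The relators of Thompson's group `F` (infinite presentation). -/
def thompsonRels : Set (FreeGroup ℕ) :=
  {w | ∃ i j : ℕ, i < j ∧
    w = FreeGroup.of j * FreeGroup.of i * (FreeGroup.of i * FreeGroup.of (j + 1))⁻¹}

/-- Thompson's group `F`. -/
abbrev ThompsonF := PresentedGroup thompsonRels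

/-- The generators `x_n` of Thompson's group. -/
def xF (n : ℕ) : ThompsonF := PresentedGroup.of n

/-- Word length, as a monoid homomorphism on the free monoid. -/
def lenHom : FreeMonoid ℕ →* Multiplicative ℕ where
  toFun w := Multiplicative.ofAdd w.length
  map_one' := by simp
  map_mul' a b := by
    simp [FreeMonoid.length_mul, ofAdd_add]

/-- Length is well defined on Thompson's monoid. -/
def lenM : ThompsonM →* Multiplicative ℕ :=
  Con.lift _ lenHom (by
    apply Con.conGen_le.2
    rintro a b ⟨i, j, hij, rfl, rfl⟩
    simp [Con.ker_rel, lenHom, FreeMonoid.length_mul]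
    rfl)

/-- The length of an element of Thompson's monoid. -/
def mlen (g : ThompsonM) : ℕ := Multiplicative.toAdd (lenM g)

/-- The degree of an element of the monoid ring `K[M]`. -/
noncomputable def mdeg {K : Type*} [Field K] (a : MonoidAlgebra K ThompsonM) : ℕ :=
  a.coeff.support.sup mlen

/-- The submonoid `M_i` of `M` generated by `x_i, x_{i+1}, …`. -/
def Msub (i : ℕ) : Submonoid ThompsonM :=
  Submonoid.closure {g | ∃ n : ℕ, i ≤ n ∧ g = xM n}

/-- The shift endomorphism of the monoid ring `K[M]` induced by `φ`. -/
noncomputable def shiftA (K : Type*) [Field K] :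
    MonoidAlgebra K ThompsonM →+* MonoidAlgebra K ThompsonM :=
  MonoidAlgebra.mapDomainRingHom K shiftM

/-- The natural homomorphism of Thompson's monoid into Thompson's group. -/
def iotaMF : ThompsonM →* ThompsonF :=
  Con.lift _ (FreeMonoid.lift xF) (by
    apply Con.conGen_le.2
    rintro a b ⟨i, j, hij, rfl, rfl⟩
    simp only [Con.ker_rel, map_mul, FreeMonoid.lift_eval_of]
    have h : (FreeGroup.of j * FreeGroup.of i *
        (FreeGroup.of i * FreeGroup.of (j + 1))⁻¹ : FreeGroup ℕ) ∈ thompsonRels :=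
      ⟨i, j, hij, rfl⟩
    have h1 : PresentedGroup.mk thompsonRels
        (FreeGroup.of j * FreeGroup.of i * (FreeGroup.of i * FreeGroup.of (j + 1))⁻¹) = 1 := by
      exact (QuotientGroup.eq_one_iff _).2 (Subgroup.subset_normalClosure h)
    have := h1
    rw [map_mul, map_mul, map_inv, map_mul, mul_inv_eq_one] at this
    simpa [xF, PresentedGroup.of] using this)

/-- The generator `x_n` as an element of the group ring `K[F]`. -/
noncomputable def XF (K : Type*) [Field K] (n : ℕ) : MonoidAlgebra K ThompsonF :=
  MonoidAlgebra.of K ThompsonF (xF n)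

/-- The generator `x_n` as an element of the monoid ring `K[M]`. -/
noncomputable def XMa (K : Type*) [Field K] (n : ℕ) : MonoidAlgebra K ThompsonM :=
  MonoidAlgebra.of K ThompsonM (xM n)

lemma xM_rel (i j : ℕ) (hij : i < j) : xM j * xM i = xM i * xM (j + 1) := by
  have : thompsonCon (FreeMonoid.of j * FreeMonoid.of i)
      (FreeMonoid.of i * FreeMonoid.of (j + 1)) :=
    ConGen.Rel.of _ _ ⟨i, j, hij, rfl, rfl⟩
  simpa [xM, ← map_mul] using (Con.eq thompsonCon).2 this

lemma XMa_rel (K : Type*) [Field K] (i j : ℕ) (hij : i < j) :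
    XMa K j * XMa K i = XMa K i * XMa K (j + 1) := by
  simp only [XMa, ← map_mul, xM_rel i j hij]

lemma shiftM_xM (n : ℕ) : shiftM (xM n) = xM (n + 1) := by
  simp [shiftM, xM, Con.lift_coe]
  rfl

lemma shiftA_XMa (K : Type*) [Field K] (n : ℕ) :
    shiftA K (XMa K n) = XMa K (n + 1) := by
  simp [shiftA, XMa, MonoidAlgebra.mapDomainRingHom, MonoidAlgebra.of_apply,
    Finsupp.mapDomain_single, shiftM_xM]

lemma key_ring {R : Type*} [Ring R] (a b c d p q w : R)
    (hba : b * a = a * c) (hca : c * a = a * d) (hcb : c * b = b * d)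
    (h : (1 - b) * p = (1 - c) * q) :
    (1 - a) * ((1 + a - b) * (1 - d) * w + (1 - b) * p) =
      (1 - b) * ((1 - d - a ^ 2 + a * b) * w + p - a * q) := by
  have h1 : b * (a * a) = a * (a * d) := by
    rw [← mul_assoc, hba, mul_assoc, hca]
  have h2 : b * (a * b) = a * (b * d) := by
    rw [← mul_assoc, hba, mul_assoc, hcb]
  have expand :
      (1 - a) * ((1 + a - b) * (1 - d) * w + (1 - b) * p) -
        (1 - b) * ((1 - d - a ^ 2 + a * b) * w + p - a * q) =
      (a * (a * d) - b * (a * a)) * w + (b * (a * b) - a * (b * d)) * w +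
        a * ((1 - c) * q - (1 - b) * p) + (a * c - b * a) * q := by
    noncomm_ring
  have hz : (1 - c) * q - (1 - b) * p = 0 := by rw [h, sub_self]
  rw [h1, h2, hba, hz] at expand
  simp only [sub_self, zero_mul, mul_zero, add_zero, zero_add] at expand
  exact sub_eq_zero.mp expand

/-- if `(u', v')` solves `(1-x_0)u = (1-x_1)v` in `K[M]` and
`w ∈ K[M]`, then `u = u_0 w + (1-x_1)φ(u')`, `v = v_0 w + φ(u') - x_0 φ(v')`
is again a solution, where `u_0 = (1 + x_0 - x_1)(1 - x_3)` and
`v_0 = 1 - x_3 - x_0² + x_0 x_1`. -/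
theorem stmt14 (K : Type*) [Field K] (u' v' w : MonoidAlgebra K ThompsonM)
    (h : (1 - XMa K 0) * u' = (1 - XMa K 1) * v') :
    (1 - XMa K 0) *
        ((1 + XMa K 0 - XMa K 1) * (1 - XMa K 3) * w + (1 - XMa K 1) * shiftA K u') =
      (1 - XMa K 1) *
        ((1 - XMa K 3 - XMa K 0 ^ 2 + XMa K 0 * XMa K 1) * w
          + shiftA K u' - XMa K 0 * shiftA K v') := by
  have hφ : (1 - XMa K 1) * shiftA K u' = (1 - XMa K 2) * shiftA K v' := by
    have := congrArg (shiftA K) h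
    simpa [map_mul, map_sub, map_one, shiftA_XMa] using this
  exact key_ring (XMa K 0) (XMa K 1) (XMa K 2) (XMa K 3) (shiftA K u') (shiftA K v') w
    (XMa_rel K 0 1 (by norm_num)) (XMa_rel K 0 2 (by norm_num))
    (XMa_rel K 1 2 (by norm_num)) hφ
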